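/- arXiv:2004.12011 — 2 statements merged into one kernel-verified Lean document; each statement's English description precedes it below -/
import Mathlib

section
/- With μ ≠ 0, |μ| < α/a, a > 0, α > 0, γ ∈ ℝ, υ = 1 − (a/α)μ, and h₂(t) = a μ (1 − υ e^{−μ(T−t)})^{−1}, the function h₁(t) = (1 − υ e^{−μ(T−t)})^{−1}[(1 − 2aγ) μ (t−T) + υ(1 − e^{−μ(T−t)})] solves −h₁'(t) + μ(1 − h₁(t)) + (1/a) h₂(t) h₁(t) − 2γ h₂(t) = 0 on [0,T] with h₁(T) = 0. -/
/-- Nonzero-drift case: with `υ = 1 − (a/α)μ` and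
`h₂(t) = aμ (1 − υ e^{−μ(T−t)})⁻¹`, the function
`h₁(t) = (1 − υ e^{−μ(T−t)})⁻¹ [(1 − 2aγ) μ (t−T) + υ (1 − e^{−μ(T−t)})]` solves
`−h₁' + μ(1 − h₁) + (1/a) h₂ h₁ − 2γ h₂ = 0` on `[0,T]` with `h₁(T) = 0`. -/
theorem h1_solves_ode_mu_ne_zero (a α γ μ T : ℝ) (ha : 0 < a) (hα : 0 < α) (hT : 0 < T)
    (hμ : μ ≠ 0) (hμabs : |μ| < α / a) (h₁ h₂ : ℝ → ℝ)
    (hh2 : ∀ t, h₂ t = a * μ * (1 - (1 - (a / α) * μ) * Real.exp (-μ * (T - t)))⁻¹)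
    (hh1 : ∀ t, h₁ t = (1 - (1 - (a / α) * μ) * Real.exp (-μ * (T - t)))⁻¹ *
      ((1 - 2 * a * γ) * μ * (t - T) +
        (1 - (a / α) * μ) * (1 - Real.exp (-μ * (T - t))))) :
    (∀ t ∈ Set.Icc (0 : ℝ) T, ∃ d : ℝ, HasDerivAt h₁ d t ∧
      -d + μ * (1 - h₁ t) + (1 / a) * h₂ t * h₁ t - 2 * γ * h₂ t = 0) ∧ h₁ T = 0 := by
  have ha' : a ≠ 0 := ne_of_gt ha
  have hα' : α ≠ 0 := ne_of_gt hα
  have haα : 0 < a / α := div_pos ha hα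
  have habs : (a / α) * |μ| < 1 := by
    have := mul_lt_mul_of_pos_left hμabs haα
    rwa [div_mul_div_comm, mul_comm α a, div_self (by positivity)] at this
  have hub : (a / α) * μ < 1 := lt_of_le_of_lt (by nlinarith [le_abs_self μ]) habs
  have hlb : -1 < (a / α) * μ := by nlinarith [neg_abs_le μ]
  have hDne : ∀ t, t ≤ T → 1 - (1 - (a / α) * μ) * Real.exp (-μ * (T - t)) ≠ 0 := by
    intro t ht
    rcases lt_or_gt_of_ne hμ with hneg | hpos
    · -- μ < 0 : exponent ≥ 0, e ≥ 1, υ > 1, so D < 0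
      have he : (1 : ℝ) ≤ Real.exp (-μ * (T - t)) := by
        rw [← Real.exp_zero]
        exact Real.exp_le_exp.2 (by nlinarith)
      have hυ : (1 : ℝ) < 1 - (a / α) * μ := by nlinarith
      nlinarith
    · -- μ > 0 : exponent ≤ 0, e ≤ 1, 0 < υ < 1, so D > 0
      have he : Real.exp (-μ * (T - t)) ≤ 1 := by
        rw [← Real.exp_zero]
        exact Real.exp_le_exp.2 (by nlinarith)
      have he' : 0 < Real.exp (-μ * (T - t)) := Real.exp_pos _
      have hυ : 1 - (a / α) * μ < 1 := by nlinarith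
      have hυ' : 0 < 1 - (a / α) * μ := by nlinarith
      nlinarith
  constructor
  · intro t ht
    have hD := hDne t ht.2
    set υ : ℝ := 1 - (a / α) * μ with hυdef
    -- derivative of the exponential part
    have hE : HasDerivAt (fun s : ℝ => Real.exp (-μ * (T - s)))
        (μ * Real.exp (-μ * (T - t))) t := by
      have hlin : HasDerivAt (fun s : ℝ => -μ * (T - s)) μ t := by
        have := ((hasDerivAt_id t).const_sub T).const_mul (-μ)
        simpa using this
      simpa [mul_comm] using hlin.exp
    set E : ℝ := Real.exp (-μ * (T - t)) with hEdef
    -- derivative of D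
    have hDder : HasDerivAt (fun s : ℝ => 1 - υ * Real.exp (-μ * (T - s)))
        (-(υ * (μ * E))) t := by
      simpa using ((hE.const_mul υ).const_sub 1)
    -- derivative of D⁻¹
    have hInv : HasDerivAt (fun s : ℝ => (1 - υ * Real.exp (-μ * (T - s)))⁻¹)
        (-(-(υ * (μ * E))) / (1 - υ * E) ^ 2) t := hDder.inv hD
    -- derivative of N
    have hN : HasDerivAt (fun s : ℝ => (1 - 2 * a * γ) * μ * (s - T) +
        υ * (1 - Real.exp (-μ * (T - s))))
        ((1 - 2 * a * γ) * μ * 1 + υ * (-(μ * E))) t := by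
      have h1' : HasDerivAt (fun s : ℝ => (1 - 2 * a * γ) * μ * (s - T))
          ((1 - 2 * a * γ) * μ * 1) t := by
        simpa using ((hasDerivAt_id t).sub_const T).const_mul ((1 - 2 * a * γ) * μ)
      have h2' : HasDerivAt (fun s : ℝ => υ * (1 - Real.exp (-μ * (T - s))))
          (υ * (-(μ * E))) t := by
        simpa using ((hE.const_sub 1).const_mul υ)
      exact h1'.add h2'
    have hprod := hInv.mul hN
    have hfun : h₁ = fun s : ℝ => (1 - υ * Real.exp (-μ * (T - s)))⁻¹ *
        ((1 - 2 * a * γ) * μ * (s - T) + υ * (1 - Real.exp (-μ * (T - s)))) :=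
      funext hh1
    rw [hfun]
    refine ⟨_, hprod, ?_⟩
    rw [hh2 t]
    beta_reduce
    rw [← hEdef]
    set D : ℝ := 1 - υ * E with hDdef
    set N : ℝ := (1 - 2 * a * γ) * μ * (t - T) + υ * (1 - E) with hNdef
    have hD2 : D ^ 2 ≠ 0 := pow_ne_zero 2 hD
    rw [hNdef, hDdef]
    have hD' : 1 - υ * E ≠ 0 := hD
    field_simp
    ring
  · rw [hh1 T]
    simp
end

section
/- For μ ≠ 0 and a > 0, the limit as α → +∞ of h₂(t) equals a μ / (1 − e^{−μ(T−t)}) for each t ∈ [0,T), and this limiting function satisfies lim_{t→T} h₂∞(t)·(T−t) = a. Similarly the limit of h₁ equals h₁∞(t) = (1 − e^{−μ(T−t)})^{−1}(1 − 2aγ)μ(t−T) + 1, and lim_{t→T} h₁∞(t) = 2aγ. -/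
open Filter

lemma core_lim (μ : ℝ) (hμ : μ ≠ 0) :
    Tendsto (fun s : ℝ => s / (1 - Real.exp (-μ * s)))
      (nhdsWithin 0 {(0:ℝ)}ᶜ) (nhds μ⁻¹) := by
  have hd : HasDerivAt (fun s : ℝ => 1 - Real.exp (-μ * s)) μ 0 := by
    have h1 : HasDerivAt (fun s : ℝ => -μ * s) (-μ) 0 := by
      simpa using (hasDerivAt_id (0:ℝ)).const_mul (-μ)
    have h2 := h1.exp
    have h3 := h2.const_sub 1
    simpa using h3
  have hs := hasDerivAt_iff_tendsto_slope.mp hd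
  have hinv := hs.inv₀ hμ
  refine hinv.congr' ?_
  filter_upwards [self_mem_nhdsWithin] with s hs0
  simp [slope_def_field, div_eq_iff, inv_div]

lemma sub_lim (T : ℝ) :
    Tendsto (fun t : ℝ => T - t) (nhdsWithin T (Set.Iio T)) (nhdsWithin 0 {(0:ℝ)}ᶜ) := by
  rw [tendsto_nhdsWithin_iff]
  constructor
  · have : Tendsto (fun t : ℝ => T - t) (nhds T) (nhds (T - T)) :=
      (tendsto_const_nhds.sub tendsto_id)
    simpa using this.mono_left nhdsWithin_le_nhds
  · filter_upwards [self_mem_nhdsWithin] with t ht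
    simp only [Set.mem_Iio] at ht
    simp only [Set.mem_compl_iff, Set.mem_singleton_iff]
    linarith

/-- Nonzero-drift case, limit of infinite terminal penalty: as `α → ∞`,
`h₂(t) → aμ/(1 − e^{−μ(T−t)})` and `h₁(t) → (1 − e^{−μ(T−t)})⁻¹ (1−2aγ) μ (t−T) + 1`
for each `t ∈ [0,T)`; moreover, as `t → T⁻`, `h₂∞(t)(T−t) → a` and `h₁∞(t) → 2aγ`. -/
theorem limit_infinite_penalty_mu_ne_zero (a γ μ T : ℝ) (ha : 0 < a) (hμ : μ ≠ 0)
    (hT : 0 < T) :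
    (∀ t ∈ Set.Ico (0 : ℝ) T,
      Tendsto (fun α : ℝ =>
          a * μ / (1 - (1 - (a / α) * μ) * Real.exp (-μ * (T - t)))) atTop
        (nhds (a * μ / (1 - Real.exp (-μ * (T - t)))))) ∧
    Tendsto (fun t : ℝ => a * μ / (1 - Real.exp (-μ * (T - t))) * (T - t))
      (nhdsWithin T (Set.Iio T)) (nhds a) ∧
    (∀ t ∈ Set.Ico (0 : ℝ) T,
      Tendsto (fun α : ℝ =>
          (1 - (1 - (a / α) * μ) * Real.exp (-μ * (T - t)))⁻¹ *
            ((1 - 2 * a * γ) * μ * (t - T) +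
              (1 - (a / α) * μ) * (1 - Real.exp (-μ * (T - t))))) atTop
        (nhds ((1 - Real.exp (-μ * (T - t)))⁻¹ * ((1 - 2 * a * γ) * μ * (t - T)) + 1))) ∧
    Tendsto
      (fun t : ℝ =>
        (1 - Real.exp (-μ * (T - t)))⁻¹ * ((1 - 2 * a * γ) * μ * (t - T)) + 1)
      (nhdsWithin T (Set.Iio T)) (nhds (2 * a * γ)) := by
  -- common facts
  have hne : ∀ t ∈ Set.Ico (0 : ℝ) T, (1 - Real.exp (-μ * (T - t))) ≠ 0 := by
    intro t ht
    have h1 : -μ * (T - t) ≠ 0 := by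
      have : T - t ≠ 0 := by
        have := ht.2; intro h; linarith [sub_eq_zero.mp h]
      exact mul_ne_zero (neg_ne_zero.mpr hμ) this
    have : Real.exp (-μ * (T - t)) ≠ 1 := by
      rw [← Real.exp_zero]
      exact fun h => h1 (Real.exp_injective h)
    intro h; exact this (by linarith)
  have haα : Tendsto (fun α : ℝ => a / α) atTop (nhds 0) :=
    tendsto_const_nhds.div_atTop tendsto_id
  -- the composed core limit
  have hcomp : Tendsto (fun t : ℝ => (T - t) / (1 - Real.exp (-μ * (T - t))))
      (nhdsWithin T (Set.Iio T)) (nhds μ⁻¹) := (core_lim μ hμ).comp (sub_lim T)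
  refine ⟨?_, ?_, ?_, ?_⟩
  · intro t ht
    have hden : Tendsto (fun α : ℝ =>
        1 - (1 - (a / α) * μ) * Real.exp (-μ * (T - t))) atTop
        (nhds (1 - Real.exp (-μ * (T - t)))) := by
      have t1 : Tendsto (fun α : ℝ => 1 - (a / α) * μ) atTop (nhds 1) := by
        simpa using (haα.mul_const μ).const_sub 1
      simpa using ((t1.mul_const (Real.exp (-μ * (T - t)))).const_sub 1)
    exact tendsto_const_nhds.div hden (hne t ht)
  · have := hcomp.const_mul (a * μ)
    have heq : a * μ * μ⁻¹ = a := by field_simp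
    rw [heq] at this
    refine this.congr fun t => by ring
  · intro t ht
    have hden : Tendsto (fun α : ℝ =>
        (1 - (1 - (a / α) * μ) * Real.exp (-μ * (T - t)))⁻¹) atTop
        (nhds (1 - Real.exp (-μ * (T - t)))⁻¹) := by
      have h' : Tendsto (fun α : ℝ =>
          1 - (1 - (a / α) * μ) * Real.exp (-μ * (T - t))) atTop
          (nhds (1 - Real.exp (-μ * (T - t)))) := by
        have t1 : Tendsto (fun α : ℝ => 1 - (a / α) * μ) atTop (nhds 1) := by
          simpa using (haα.mul_const μ).const_sub 1
        simpa using ((t1.mul_const (Real.exp (-μ * (T - t)))).const_sub 1)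
      exact h'.inv₀ (hne t ht)
    have hnum : Tendsto (fun α : ℝ =>
        (1 - 2 * a * γ) * μ * (t - T) +
          (1 - (a / α) * μ) * (1 - Real.exp (-μ * (T - t)))) atTop
        (nhds ((1 - 2 * a * γ) * μ * (t - T) + (1 - Real.exp (-μ * (T - t))))) := by
      have t1 : Tendsto (fun α : ℝ => 1 - (a / α) * μ) atTop (nhds 1) := by
        simpa using (haα.mul_const μ).const_sub 1
      simpa using ((t1.mul_const (1 - Real.exp (-μ * (T - t)))).const_add
        ((1 - 2 * a * γ) * μ * (t - T)))
    have := hden.mul hnum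
    have heq : (1 - Real.exp (-μ * (T - t)))⁻¹ *
        ((1 - 2 * a * γ) * μ * (t - T) + (1 - Real.exp (-μ * (T - t)))) =
        (1 - Real.exp (-μ * (T - t)))⁻¹ * ((1 - 2 * a * γ) * μ * (t - T)) + 1 := by
      rw [mul_add, inv_mul_cancel₀ (hne t ht)]
    rwa [heq] at this
  · have h1 := hcomp.const_mul (-(1 - 2 * a * γ) * μ)
    have h2 := h1.add_const 1
    have heq : -(1 - 2 * a * γ) * μ * μ⁻¹ + 1 = 2 * a * γ := by field_simp; ring
    rw [heq] at h2
    refine h2.congr fun t => ?_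
    have : (1 - Real.exp (-μ * (T - t)))⁻¹ * ((1 - 2 * a * γ) * μ * (t - T)) =
        -(1 - 2 * a * γ) * μ * ((T - t) / (1 - Real.exp (-μ * (T - t)))) := by
      rw [div_eq_mul_inv]; ring
    rw [this]
end
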